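/- Let Y ⊆ ℝ^d be closed and convex, and for i ∈ I let f_i, F̂_i : Y → ℝ be continuous and convex. Let γ, ε ∈ ℝ with ε < γ, and suppose there is y ∈ Y with f_i(y) < ε for all i ∈ I. Define X_γ := {x ∈ Y : f_i(x) ≤ γ ∀i}, X̂ := {x ∈ Y : F̂_i(x) ≤ ε̂_i ∀i}, δ̂_i(y) := max(0, F̂_i(y) − f_i(y)), and Δ̂_i(γ) := max(0, sup{γ − F̂_i(x) : x ∈ X_γ, f_i(x) = γ}). If for all i ∈ I both Δ̂_i(γ) + δ̂_i(y) ≤ γ − ε and Δ̂_i(γ) ≤ γ − ε̂_i hold, then X̂ ⊆ X_γ. -/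

import Mathlib

/-- Localized feasibility deviation for convex feasible sets: feasibility of the
perturbed set is controlled by the perturbation at one strictly feasible point `y`
and on the active level sets `{x ∈ X_γ : f_i x = γ}`. -/
theorem stmt_1 {d : ℕ} {ι : Type*} [Fintype ι]
    (Y : Set (EuclideanSpace ℝ (Fin d))) (hYcl : IsClosed Y) (hYcon : Convex ℝ Y)
    (f Fh : ι → EuclideanSpace ℝ (Fin d) → ℝ)
    (hfc : ∀ i, ContinuousOn (f i) Y) (hFc : ∀ i, ContinuousOn (Fh i) Y)
    (hfv : ∀ i, ConvexOn ℝ Y (f i)) (hFv : ∀ i, ConvexOn ℝ Y (Fh i))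
    (γ ε : ℝ) (hεγ : ε < γ) (εh : ι → ℝ)
    (y : EuclideanSpace ℝ (Fin d)) (hy : y ∈ Y) (hyin : ∀ i, f i y < ε)
    (hC1 : ∀ i, max 0 (Fh i y - f i y) ≤ γ - ε ∧
      ∀ x ∈ Y, (∀ j, f j x ≤ γ) → f i x = γ →
        (γ - Fh i x) + max 0 (Fh i y - f i y) ≤ γ - ε)
    (hC2 : ∀ i, 0 ≤ γ - εh i ∧
      ∀ x ∈ Y, (∀ j, f j x ≤ γ) → f i x = γ → γ - Fh i x ≤ γ - εh i) :
    {x ∈ Y | ∀ i, Fh i x ≤ εh i} ⊆ {x ∈ Y | ∀ i, f i x ≤ γ} := by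
  rintro x ⟨hxY, hxF⟩
  refine ⟨hxY, ?_⟩
  by_contra hcon
  push_neg at hcon
  obtain ⟨i0, hi0⟩ := hcon
  haveI : Nonempty ι := ⟨i0⟩
  set c : ℝ → EuclideanSpace ℝ (Fin d) := fun t => (1 - t) • y + t • x with hc
  have hcY : ∀ t ∈ Set.Icc (0:ℝ) 1, c t ∈ Y := fun t ht =>
    hYcon hy hxY (by linarith [ht.2]) ht.1 (by ring)
  have hccont : Continuous c := by
    show Continuous (fun t : ℝ => (1 - t) • y + t • x); fun_prop
  set g : ℝ → ℝ := fun t => Finset.univ.sup' Finset.univ_nonempty (fun i => f i (c t))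
    with hg
  have hgcont : ContinuousOn g (Set.Icc 0 1) := by
    apply ContinuousOn.finset_sup'_apply Finset.univ_nonempty
    intro i _
    exact ((hfc i).comp hccont.continuousOn) (fun t ht => hcY t ht)
  have hc0 : c 0 = y := by simp [hc]
  have hc1 : c 1 = x := by simp [hc]
  have hg0 : g 0 < γ := by
    refine (Finset.sup'_lt_iff Finset.univ_nonempty).mpr (fun i _ => ?_)
    rw [hc0]; exact lt_trans (hyin i) hεγ
  have hg1 : γ < g 1 := by
    have h : f i0 (c 1) ≤ g 1 :=
      Finset.le_sup' (f := fun i => f i (c 1)) (Finset.mem_univ i0)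
    rw [hc1] at h
    exact lt_of_lt_of_le hi0 h
  have hmem : γ ∈ Set.Icc (g 0) (g 1) := ⟨hg0.le, hg1.le⟩
  obtain ⟨t, ht, hgt⟩ := intermediate_value_Icc (by norm_num) hgcont hmem
  have ht1 : t < 1 := by
    rcases lt_or_eq_of_le ht.2 with h | h
    · exact h
    · subst h; exact absurd hgt (ne_of_gt hg1)
  set z := c t with hz
  have hzY : z ∈ Y := hcY t ht
  have hzle : ∀ j, f j z ≤ γ := by
    intro j
    have h : f j (c t) ≤ g t :=
      Finset.le_sup' (f := fun i => f i (c t)) (Finset.mem_univ j)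
    exact le_of_le_of_eq h hgt
  obtain ⟨i, _, hieq⟩ := Finset.exists_mem_eq_sup' Finset.univ_nonempty
    (fun i => f i (c t))
  have hfiz : f i z = γ := by rw [hz]; rw [← hieq]; exact hgt
  -- key inequalities
  set δ := max 0 (Fh i y - f i y) with hδ
  have h1 := (hC1 i).2 z hzY hzle hfiz
  have h2 := (hC2 i).2 z hzY hzle hfiz
  have hFy : Fh i y ≤ f i y + δ := by
    have := le_max_right 0 (Fh i y - f i y); linarith [this]
  have hFylt : Fh i y < Fh i z := by
    have := hyin i; linarith
  have hFxle : Fh i x ≤ Fh i z := le_trans (hxF i) (by linarith)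
  have hconv : Fh i z ≤ (1 - t) * Fh i y + t * Fh i x := by
    have h0 : (0:ℝ) ≤ 1 - t := by linarith
    have h : Fh i ((1 - t) • y + t • x) ≤ (1 - t) • Fh i y + t • Fh i x :=
      (hFv i).2 hy hxY h0 ht.1 (by ring)
    simpa [smul_eq_mul] using h
  have k1 := mul_pos (sub_pos.mpr ht1) (sub_pos.mpr hFylt)
  have k2 := mul_nonneg ht.1 (sub_nonneg.mpr hFxle)
  nlinarith [k1, k2, hconv]
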